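/- Let f, g, p, q : (0,∞) → (0,∞) be positive functions satisfying f(x)·g(y) = p(x+y)·q(x/y) for all x, y > 0, and assume all four are continuous. Then there exist constants λ ∈ ℝ, C₁, C₂ ∈ ℝ, and K₁, K₂, K₃ > 0 such that f(x) = K₁ e^{λx} x^{C₁}, g(x) = K₂ e^{λx} x^{C₂}, and p(x) = K₃ e^{λx} x^{C₁+C₂} for all x > 0. -/

import Mathlib

/-- Cauchy's functional equation on positive reals with continuity. -/
lemma cauchy_pos (w : ℝ → ℝ) (hc : ContinuousOn w (Set.Ioi 0))
    (hadd : ∀ d > (0:ℝ), ∀ e > (0:ℝ), w (d + e) = w d + w e) :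
    ∀ d > (0:ℝ), w d = w 1 * d := by
  have hnat : ∀ n : ℕ, ∀ d > (0:ℝ), w (((n:ℝ)+1) * d) = ((n:ℝ)+1) * w d := by
    intro n
    induction n with
    | zero => intro d hd; simp
    | succ k ih =>
      intro d hd
      have h1 : (((k+1:ℕ):ℝ)+1) * d = ((k:ℝ)+1)*d + d := by push_cast; ring
      rw [h1, hadd _ (by positivity) _ hd, ih d hd]
      push_cast; ring
  have hrat : ∀ m n : ℕ, w (((m:ℝ)+1)/((n:ℝ)+1)) = (((m:ℝ)+1)/((n:ℝ)+1)) * w 1 := by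
    intro m n
    have hd : (0:ℝ) < ((m:ℝ)+1)/((n:ℝ)+1) := by positivity
    have h1 : ((n:ℝ)+1) * (((m:ℝ)+1)/((n:ℝ)+1)) = ((m:ℝ)+1) * 1 := by
      field_simp
    have h2 := hnat n _ hd
    rw [h1, hnat m 1 one_pos] at h2
    have hn : ((n:ℝ)+1) ≠ 0 := by positivity
    field_simp at h2 ⊢
    linarith [h2]
  -- density
  intro d hd
  set u : ℕ → ℝ := fun k => ((⌈((k:ℝ)+1) * d⌉.toNat : ℝ)) / ((k:ℝ)+1) with hu
  have hpos : ∀ k : ℕ, (1:ℤ) ≤ ⌈((k:ℝ)+1) * d⌉ := by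
    intro k
    exact Int.one_le_ceil_iff.mpr (by positivity)
  have hcast : ∀ k : ℕ, ((⌈((k:ℝ)+1) * d⌉.toNat : ℝ)) = (⌈((k:ℝ)+1) * d⌉ : ℝ) := by
    intro k
    have h0 : (0:ℤ) ≤ ⌈((k:ℝ)+1) * d⌉ := le_trans zero_le_one (hpos k)
    exact_mod_cast Int.toNat_of_nonneg h0
  have hlow : ∀ k : ℕ, d ≤ u k := by
    intro k
    rw [hu]; simp only
    rw [hcast k, le_div_iff₀ (by positivity), mul_comm]
    exact Int.le_ceil _
  have hhigh : ∀ k : ℕ, u k ≤ d + 1/((k:ℝ)+1) := by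
    intro k
    rw [hu]; simp only
    rw [hcast k, div_le_iff₀ (by positivity)]
    have := (Int.ceil_lt_add_one (((k:ℝ)+1) * d)).le
    calc (⌈((k:ℝ)+1) * d⌉ : ℝ) ≤ ((k:ℝ)+1)*d + 1 := this
      _ = (d + 1/((k:ℝ)+1)) * ((k:ℝ)+1) := by field_simp
  have htend : Filter.Tendsto u Filter.atTop (nhds d) := by
    have h2 : Filter.Tendsto (fun k : ℕ => d + 1/((k:ℝ)+1)) Filter.atTop (nhds d) := by
      have := tendsto_one_div_add_atTop_nhds_zero_nat (𝕜 := ℝ)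
      have h := Filter.Tendsto.const_add d this
      simpa using h
    exact tendsto_of_tendsto_of_tendsto_of_le_of_le tendsto_const_nhds h2 hlow hhigh
  have huval : ∀ k : ℕ, w (u k) = w 1 * u k := by
    intro k
    have h1 : (1:ℤ) ≤ ⌈((k:ℝ)+1) * d⌉ := hpos k
    have hm : 1 ≤ ⌈((k:ℝ)+1) * d⌉.toNat := by omega
    obtain ⟨m, hm'⟩ : ∃ m : ℕ, ⌈((k:ℝ)+1) * d⌉.toNat = m + 1 := ⟨_, (Nat.succ_pred_eq_of_pos hm).symm⟩
    have : u k = ((m:ℝ)+1)/((k:ℝ)+1) := by rw [hu]; simp only; rw [hm']; push_cast; ring_nf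
    rw [this, hrat m k]; ring
  -- continuity at d within Ioi 0
  have hcw : ContinuousWithinAt w (Set.Ioi 0) d := hc d hd
  have humem : ∀ k : ℕ, u k ∈ Set.Ioi (0:ℝ) := fun k => lt_of_lt_of_le hd (hlow k)
  have htend' : Filter.Tendsto u Filter.atTop (nhdsWithin d (Set.Ioi 0)) := by
    rw [tendsto_nhdsWithin_iff]
    exact ⟨htend, Filter.Eventually.of_forall humem⟩
  have h3 : Filter.Tendsto (fun k => w (u k)) Filter.atTop (nhds (w d)) :=
    (hcw.tendsto).comp htend'
  have h4 : Filter.Tendsto (fun k => w 1 * u k) Filter.atTop (nhds (w 1 * d)) :=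
    (htend.const_mul _)
  have h5 : (fun k => w (u k)) = fun k => w 1 * u k := funext huval
  rw [h5] at h3
  exact tendsto_nhds_unique h3 h4

/-- Continuous midpoint-affine functions on (0,∞) are affine. -/
lemma jensen_affine (g : ℝ → ℝ) (hc : ContinuousOn g (Set.Ioi 0))
    (hJ : ∀ x > (0:ℝ), ∀ y > (0:ℝ), g x + g y = 2 * g ((x+y)/2)) :
    ∀ x > (0:ℝ), g x = (g 2 - g 1) * x + (2 * g 1 - g 2) := by
  have key : ∀ x > (0:ℝ), ∀ d > (0:ℝ), g (x + d) = g x + (g (1 + d) - g 1) := by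
    intro x hx d hd
    have h1 := hJ (x+d) (by positivity) 1 one_pos
    have h2 := hJ x hx (1+d) (by positivity)
    have h3 : (x + d + 1)/2 = (x + (1+d))/2 := by ring
    rw [h3] at h1
    linarith
  set w : ℝ → ℝ := fun d => g (1 + d) - g 1 with hw
  have hwadd : ∀ d > (0:ℝ), ∀ e > (0:ℝ), w (d + e) = w d + w e := by
    intro d hd e he
    have := key (1 + d) (by positivity) e he
    simp only [hw]
    have h4 : 1 + (d + e) = 1 + d + e := by ring
    rw [h4, this]
    ring
  have hwc : ContinuousOn w (Set.Ioi 0) := by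
    apply ContinuousOn.sub _ continuousOn_const
    apply hc.comp (continuous_const.add continuous_id).continuousOn
    intro d hd
    simp only [Set.mem_Ioi, id_eq, Pi.add_apply] at *
    linarith
  have hwlin := cauchy_pos w hwc hwadd
  have hw1 : w 1 = g 2 - g 1 := by simp only [hw]; norm_num
  intro x hx
  rcases lt_trichotomy x 1 with h | h | h
  · have := key x hx (1 - x) (by linarith)
    have hval := hwlin (1-x) (by linarith)
    rw [hw1] at hval
    simp only [hw] at hval this
    have h5 : x + (1 - x) = 1 := by ring
    rw [h5] at this
    linear_combination -this - hval
  · rw [h]; ring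
  · have hval := hwlin (x-1) (by linarith)
    rw [hw1] at hval
    simp only [hw] at hval
    have h5 : (1:ℝ) + (x - 1) = x := by ring
    rw [h5] at hval
    linear_combination hval

/-- Cauchy's functional equation on ℝ with continuity. -/
lemma cauchy_all (h : ℝ → ℝ) (hc : Continuous h) (hadd : ∀ x y, h (x+y) = h x + h y) :
    ∀ x, h x = h 1 * x := by
  have h0 : h 0 = 0 := by have := hadd 0 0; simp at this; linarith
  have hpos := cauchy_pos h hc.continuousOn (fun d _ e _ => hadd d e)
  intro x
  rcases lt_trichotomy x 0 with hx | hx | hx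
  · have hneg : h (-x) = h 1 * (-x) := hpos (-x) (by linarith)
    have h2 := hadd x (-x)
    have e : x + (-x) = 0 := by ring
    rw [e, h0] at h2
    linarith
  · rw [hx, h0]; ring
  · exact hpos x hx

theorem olkin_baker_multiplicative (f g p q : ℝ → ℝ)
    (hf : ∀ x > (0:ℝ), 0 < f x) (hg : ∀ x > (0:ℝ), 0 < g x)
    (hp : ∀ x > (0:ℝ), 0 < p x) (hq : ∀ x > (0:ℝ), 0 < q x)
    (heq : ∀ x > (0:ℝ), ∀ y > (0:ℝ), f x * g y = p (x + y) * q (x / y))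
    (hfc : ContinuousOn f (Set.Ioi 0)) (hgc : ContinuousOn g (Set.Ioi 0))
    (hpc : ContinuousOn p (Set.Ioi 0)) (hqc : ContinuousOn q (Set.Ioi 0)) :
    ∃ lam C₁ C₂ : ℝ, ∃ K₁ > (0:ℝ), ∃ K₂ > (0:ℝ), ∃ K₃ > (0:ℝ),
      (∀ x > (0:ℝ), f x = K₁ * Real.exp (lam * x) * x ^ C₁) ∧
      (∀ x > (0:ℝ), g x = K₂ * Real.exp (lam * x) * x ^ C₂) ∧
      ∀ x > (0:ℝ), p x = K₃ * Real.exp (lam * x) * x ^ (C₁ + C₂) := by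
  set F : ℝ → ℝ := fun x => Real.log (f x) with hFdef
  set G : ℝ → ℝ := fun x => Real.log (g x) with hGdef
  set P : ℝ → ℝ := fun x => Real.log (p x) with hPdef
  set Q : ℝ → ℝ := fun x => Real.log (q x) with hQdef
  have hFc : ContinuousOn F (Set.Ioi 0) := hfc.log (fun x hx => (hf x hx).ne')
  have hGc : ContinuousOn G (Set.Ioi 0) := hgc.log (fun x hx => (hg x hx).ne')
  have heqL : ∀ x > (0:ℝ), ∀ y > (0:ℝ), F x + G y = P (x+y) + Q (x/y) := by
    intro x hx y hy
    have h1 := heq x hx y hy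
    have h2 : Real.log (f x * g y) = F x + G y :=
      Real.log_mul (hf x hx).ne' (hg y hy).ne'
    have h3 : Real.log (p (x+y) * q (x/y)) = P (x+y) + Q (x/y) :=
      Real.log_mul (hp (x+y) (by positivity)).ne' (hq (x/y) (by positivity)).ne'
    rw [← h2, ← h3, h1]
  -- Step 1 : H = F - G
  set H : ℝ → ℝ := fun x => F x - G x with hHdef
  have hHdiff : ∀ x > (0:ℝ), ∀ y > (0:ℝ), H x - H y = Q (x/y) - Q (y/x) := by
    intro x hx y hy
    have h1 := heqL x hx y hy
    have h2 := heqL y hy x hx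
    have e : y + x = x + y := add_comm y x
    rw [e] at h2
    simp only [hHdef]
    linarith
  set c : ℝ := H (Real.exp 1) - H 1 with hcdef
  have hHform : ∀ x > (0:ℝ), H x = c * Real.log x + H 1 := by
    set h : ℝ → ℝ := fun u => H (Real.exp u) - H 1 with hhdef
    have hh_cont : Continuous h := by
      apply Continuous.sub _ continuous_const
      exact (hFc.sub hGc).comp_continuous Real.continuous_exp
        (fun u => Set.mem_Ioi.mpr (Real.exp_pos u))
    have hh_add : ∀ u v, h (u + v) = h u + h v := by
      intro u v
      have e1 := hHdiff (Real.exp (u+v)) (Real.exp_pos _) (Real.exp v) (Real.exp_pos _)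
      have e2 := hHdiff (Real.exp u) (Real.exp_pos _) 1 one_pos
      have r1 : Real.exp (u+v) / Real.exp v = Real.exp u := by
        rw [Real.exp_add]; field_simp
      have r2 : Real.exp v / Real.exp (u+v) = 1 / Real.exp u := by
        rw [Real.exp_add, mul_comm, div_mul_eq_div_div, div_self (Real.exp_ne_zero v)]
      rw [r1, r2] at e1
      rw [div_one] at e2
      show H (Real.exp (u+v)) - H 1 = (H (Real.exp u) - H 1) + (H (Real.exp v) - H 1)
      linear_combination e1 - e2
    have hlin := cauchy_all h hh_cont hh_add
    intro x hx
    have h1 := hlin (Real.log x)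
    have h2 : h 1 = c := by simp only [hhdef, hcdef]
    rw [h2] at h1
    simp only [hhdef, Real.exp_log hx] at h1
    linarith
  -- Step 2 : S = F + G
  set S : ℝ → ℝ := fun x => F x + G x with hSdef
  have hSc : ContinuousOn S (Set.Ioi 0) := hFc.add hGc
  have hPS : ∀ s > (0:ℝ), P s = S (s/2) - Q 1 := by
    intro s hs
    have hm : (0:ℝ) < s/2 := by positivity
    have h3 := heqL (s/2) hm (s/2) hm
    have e1 : s/2 + s/2 = s := by ring
    have e2 : (s/2) / (s/2) = 1 := div_self hm.ne'
    rw [e1, e2] at h3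
    simp only [hSdef]
    linarith
  have hSkey : ∀ x > (0:ℝ), ∀ y > (0:ℝ),
      S x + S y - 2 * S ((x+y)/2) = Q (x/y) + Q (y/x) - 2 * Q 1 := by
    intro x hx y hy
    have h1 := heqL x hx y hy
    have h2 := heqL y hy x hx
    have e : y + x = x + y := add_comm y x
    rw [e] at h2
    have h4 := hPS (x+y) (by positivity)
    simp only [hSdef] at h4 ⊢
    linarith
  set A : ℝ → ℝ := fun r => S (2*r) - S 2 - S r + S 1 with hAdef
  set B : ℝ → ℝ := fun r => 2*S r - 2*S 1 - S (2*r) + S 2 with hBdef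
  have hAB : ∀ r > (0:ℝ), ∀ x > (0:ℝ), S (r*x) = S x + A r * x + B r := by
    intro r hr
    set gr : ℝ → ℝ := fun x => S (r*x) - S x with hgrdef
    have hgrc : ContinuousOn gr (Set.Ioi 0) := by
      apply ContinuousOn.sub _ hSc
      apply hSc.comp (continuous_const.mul continuous_id).continuousOn
      intro x hx
      simp only [Set.mem_Ioi, id_eq, Pi.mul_apply] at *
      positivity
    have hgrJ : ∀ x > (0:ℝ), ∀ y > (0:ℝ), gr x + gr y = 2 * gr ((x+y)/2) := by
      intro x hx y hy
      have k1 := hSkey x hx y hy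
      have k2 := hSkey (r*x) (mul_pos hr hx) (r*y) (mul_pos hr hy)
      have e1 : r*x/(r*y) = x/y := mul_div_mul_left x y hr.ne'
      have e2 : r*y/(r*x) = y/x := mul_div_mul_left y x hr.ne'
      have e3 : (r*x + r*y)/2 = r*((x+y)/2) := by ring
      rw [e1, e2, e3] at k2
      simp only [hgrdef]
      linarith
    have hjen := jensen_affine gr hgrc hgrJ
    intro x hx
    have hx2 := hjen x hx
    have hg1 : gr 1 = S r - S 1 := by simp only [hgrdef, mul_one]
    have hg2 : gr 2 = S (2*r) - S 2 := by
      simp only [hgrdef]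
      rw [mul_comm]
    rw [hg1, hg2] at hx2
    simp only [hgrdef] at hx2
    simp only [hAdef, hBdef]
    linarith [hx2]
  have hcoc : ∀ r > (0:ℝ), ∀ t > (0:ℝ),
      A (r*t) = A t + A r * t ∧ B (r*t) = B t + B r := by
    intro r hr t ht
    have hrt : (0:ℝ) < r*t := mul_pos hr ht
    have q1 := hAB (r*t) hrt 1 one_pos
    have q2 := hAB (r*t) hrt 2 two_pos
    have q3 := hAB r hr t ht
    have q4 := hAB r hr (t*2) (by positivity)
    have q5 := hAB t ht 2 two_pos
    have q6 := hAB t ht 1 one_pos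
    have m1 : r*t*1 = r*t := by ring
    have m2 : r*t*2 = r*(t*2) := by ring
    have m4 : t*1 = t := mul_one t
    rw [m1] at q1
    rw [m2] at q2
    rw [q5] at q4
    rw [m4] at q6
    have m3 : A r * (t*2) = 2*(A r * t) := by ring
    rw [m3] at q4
    exact ⟨by linear_combination q1 - q2 - q3 + q4 - q6,
      by linear_combination -2*q1 + q2 + 2*q3 - q4 + 2*q6⟩
  have hAform : ∀ t > (0:ℝ), A t = A 2 * (t - 1) := by
    intro t ht
    have h1 := (hcoc 2 two_pos t ht).1
    have h2 := (hcoc t ht 2 two_pos).1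
    have e : t*2 = 2*t := mul_comm t 2
    rw [e] at h2
    linear_combination h1 - h2
  have hBc : ContinuousOn B (Set.Ioi 0) := by
    simp only [hBdef]
    apply ContinuousOn.add _ continuousOn_const
    apply ContinuousOn.sub
    · exact (continuousOn_const.mul hSc).sub continuousOn_const
    · apply hSc.comp (continuous_const.mul continuous_id).continuousOn
      intro x hx
      simp only [Set.mem_Ioi, id_eq, Pi.mul_apply] at *
      positivity
  set C : ℝ := B (Real.exp 1) with hCdef
  have hBform : ∀ r > (0:ℝ), B r = C * Real.log r := by
    set β : ℝ → ℝ := fun u => B (Real.exp u) with hβdef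
    have hβc : Continuous β :=
      hBc.comp_continuous Real.continuous_exp (fun u => Set.mem_Ioi.mpr (Real.exp_pos u))
    have hβadd : ∀ u v, β (u + v) = β u + β v := by
      intro u v
      have := (hcoc (Real.exp u) (Real.exp_pos u) (Real.exp v) (Real.exp_pos v)).2
      simp only [hβdef, Real.exp_add]
      linarith
    have hlin := cauchy_all β hβc hβadd
    intro r hr
    have h1 := hlin (Real.log r)
    simp only [hβdef, Real.exp_log hr] at h1
    rw [h1]
  set lam2 : ℝ := A 2 with hlam2def
  have hSform : ∀ r > (0:ℝ), S r = lam2 * r + C * Real.log r + (S 1 - lam2) := by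
    intro r hr
    have h1 := hAB r hr 1 one_pos
    rw [mul_one, mul_one] at h1
    rw [hAform r hr, hBform r hr] at h1
    simp only [hlam2def]
    linarith [h1]
  -- assemble
  refine ⟨lam2/2, (C + c)/2, (C - c)/2,
    Real.exp ((S 1 - lam2 + H 1)/2), Real.exp_pos _,
    Real.exp ((S 1 - lam2 - H 1)/2), Real.exp_pos _,
    Real.exp (S 1 - lam2 - Q 1 - C * Real.log 2), Real.exp_pos _, ?_, ?_, ?_⟩
  · intro x hx
    have hFx : F x = (lam2/2) * x + ((C+c)/2) * Real.log x + (S 1 - lam2 + H 1)/2 := by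
      have h1 := hSform x hx
      have h2 := hHform x hx
      have h3 : S x = F x + G x := rfl
      have h4 : H x = F x - G x := rfl
      linear_combination (h1 - h3 + h2 - h4) / 2
    have : f x = Real.exp (F x) := (Real.exp_log (hf x hx)).symm
    rw [this, hFx, Real.rpow_def_of_pos hx]
    rw [← Real.exp_add, ← Real.exp_add]
    ring_nf
  · intro x hx
    have hGx : G x = (lam2/2) * x + ((C-c)/2) * Real.log x + (S 1 - lam2 - H 1)/2 := by
      have h1 := hSform x hx
      have h2 := hHform x hx
      have h3 : S x = F x + G x := rfl
      have h4 : H x = F x - G x := rfl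
      linear_combination (h1 - h3 - h2 + h4) / 2
    have : g x = Real.exp (G x) := (Real.exp_log (hg x hx)).symm
    rw [this, hGx, Real.rpow_def_of_pos hx]
    rw [← Real.exp_add, ← Real.exp_add]
    ring_nf
  · intro x hx
    have hPx : P x = (lam2/2) * x + C * Real.log x + (S 1 - lam2 - Q 1 - C * Real.log 2) := by
      have h1 := hPS x hx
      have h2 := hSform (x/2) (by positivity)
      have h3 : Real.log (x/2) = Real.log x - Real.log 2 :=
        Real.log_div hx.ne' two_ne_zero
      rw [h2, h3] at h1
      rw [h1]
      ring
    have hCC : (C + c)/2 + (C - c)/2 = C := by ring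
    have : p x = Real.exp (P x) := (Real.exp_log (hp x hx)).symm
    rw [this, hPx, hCC, Real.rpow_def_of_pos hx]
    rw [← Real.exp_add, ← Real.exp_add]
    ring_nf
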